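/- Let l1, l2, l3 be positive integers, l = lcm(l1,l2,l3), si = l/li for i=1,2,3, and let k1, k2, k3 be integers with gcd(k1, l1) = gcd(k2, l2) = 1 and gcd(k3, l3) = 1. Then gcd(gcd(s1*k1, s2*k2, s3*k3), l) = 1. -/

import Mathlib

lemma aux_stmt4 (p : ℕ) (hp : p.Prime) (k : ℤ) (li l : ℕ) (hli : li ≠ 0)
    (hdvd : li ∣ l) (hl0 : l ≠ 0) (hk : Int.gcd k (li : ℤ) = 1)
    (hfp : l.factorization p = li.factorization p)
    (hpk : (p : ℤ) ∣ ((l / li : ℕ) : ℤ) * k) (hpl : p ∣ l) : False := by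
  have hpli : p ∣ li := by
    have h1 : 1 ≤ l.factorization p := (hp.factorization_pos_of_dvd hl0 hpl)
    rw [hfp] at h1
    exact Nat.dvd_of_factorization_pos (by omega)
  have hnds : ¬ p ∣ l / li := by
    intro hds
    have hpos : 1 ≤ (l / li).factorization p :=
      hp.factorization_pos_of_dvd (by
        intro h0
        exact hl0 (by simpa [h0] using (Nat.div_mul_cancel hdvd).symm)) hds
    rw [Nat.factorization_div hdvd] at hpos
    simp [hfp] at hpos
  have hpInt : Prime (p : ℤ) := Nat.prime_iff_prime_int.mp hp
  rcases hpInt.dvd_mul.mp hpk with h | h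
  · exact hnds (Int.natCast_dvd_natCast.mp h)
  · have : (p : ℤ) ∣ Int.gcd k (li : ℤ) := Int.dvd_coe_gcd h (Int.natCast_dvd_natCast.mpr hpli)
    rw [hk] at this
    have := Int.le_of_dvd one_pos this
    have := hp.two_le
    omega

theorem stmt_4 (l1 l2 l3 : ℕ) (h1 : 0 < l1) (h2 : 0 < l2) (h3 : 0 < l3)
    (l : ℕ) (hl : l = Nat.lcm (Nat.lcm l1 l2) l3)
    (k1 k2 k3 : ℤ)
    (hk1 : Int.gcd k1 (l1 : ℤ) = 1) (hk2 : Int.gcd k2 (l2 : ℤ) = 1)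
    (hk3 : Int.gcd k3 (l3 : ℤ) = 1) :
    Int.gcd (Int.gcd (Int.gcd ((l / l1 : ℕ) * k1) ((l / l2 : ℕ) * k2))
      ((l / l3 : ℕ) * k3)) (l : ℤ) = 1 := by
  have hl0 : l ≠ 0 := by
    rw [hl]
    simp [Nat.lcm_ne_zero, h1.ne', h2.ne', h3.ne']
  have hd1 : l1 ∣ l := hl ▸ (Nat.dvd_lcm_left l1 l2).trans (Nat.dvd_lcm_left _ _)
  have hd2 : l2 ∣ l := hl ▸ (Nat.dvd_lcm_right l1 l2).trans (Nat.dvd_lcm_left _ _)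
  have hd3 : l3 ∣ l := hl ▸ Nat.dvd_lcm_right _ _
  by_contra hne
  obtain ⟨p, hp, hpd⟩ := Nat.exists_prime_and_dvd hne
  have hpdZ : (p : ℤ) ∣ (Int.gcd (Int.gcd (Int.gcd ((l / l1 : ℕ) * k1) ((l / l2 : ℕ) * k2))
      ((l / l3 : ℕ) * k3)) (l : ℤ) : ℤ) := Int.natCast_dvd_natCast.mpr hpd
  have hA := hpdZ.trans (Int.gcd_dvd_left _ _)
  have hpl : p ∣ l := by
    have := hpdZ.trans (Int.gcd_dvd_right _ _)
    exact_mod_cast Int.natCast_dvd_natCast.mp this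
  have hp1 : (p : ℤ) ∣ ((l / l1 : ℕ) : ℤ) * k1 :=
    (hA.trans (Int.gcd_dvd_left _ _)).trans (Int.gcd_dvd_left _ _)
  have hp2 : (p : ℤ) ∣ ((l / l2 : ℕ) : ℤ) * k2 :=
    (hA.trans (Int.gcd_dvd_left _ _)).trans (Int.gcd_dvd_right _ _)
  have hp3 : (p : ℤ) ∣ ((l / l3 : ℕ) : ℤ) * k3 := hA.trans (Int.gcd_dvd_right _ _)
  have hfl : l.factorization p =
      (l1.factorization p ⊔ l2.factorization p) ⊔ l3.factorization p := by
    rw [hl, Nat.factorization_lcm (Nat.lcm_ne_zero h1.ne' h2.ne') h3.ne',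
      Nat.factorization_lcm h1.ne' h2.ne']
    rfl
  rcases le_total (l1.factorization p) (l2.factorization p) with h12 | h12 <;>
    rcases le_total (l2.factorization p) (l3.factorization p) with h23 | h23 <;>
    rcases le_total (l1.factorization p) (l3.factorization p) with h13 | h13
  all_goals first
    | exact aux_stmt4 p hp k1 l1 l h1.ne' hd1 hl0 hk1 (by omega) hp1 hpl
    | exact aux_stmt4 p hp k2 l2 l h2.ne' hd2 hl0 hk2 (by omega) hp2 hpl
    | exact aux_stmt4 p hp k3 l3 l h3.ne' hd3 hl0 hk3 (by omega) hp3 hpl
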